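/- arXiv:1503.07489 — 2 statements merged into one kernel-verified Lean document; each statement's English description precedes it below -/
import Mathlib

section
/- Let q > 0 and, for 0 < a ≤ ρ, define λ(a, ρ) = ∫_1^{sinh(ρ)/sinh(a)} (v^{2q} − 1)^{−1/2} · sinh(a) · (1 + v² sinh(a)²)^{−1/2} dv. Then for any 0 < a < b there exists exactly one ρ* ∈ (b, ∞) such that λ(a, ρ*) = λ(b, ρ*). -/
/-- The height at radius `ρ` of the profile curve of the r-catenoid with neck radius `a`. -/
noncomputable def catLam (q a ρ : ℝ) : ℝ :=
  ∫ v in (1 : ℝ)..(Real.sinh ρ / Real.sinh a),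
    (v ^ (2 * q) - 1) ^ (-(1 : ℝ) / 2) * Real.sinh a *
      (1 + v ^ 2 * Real.sinh a ^ 2) ^ (-(1 : ℝ) / 2)

open MeasureTheory Set Filter Real intervalIntegral Topology

/-- The integrand of `catLam` with `s = sinh a`. -/
noncomputable def Fc (q s v : ℝ) : ℝ :=
  (v ^ (2 * q) - 1) ^ (-(1 : ℝ) / 2) * s * (1 + v ^ 2 * s ^ 2) ^ (-(1 : ℝ) / 2)

lemma catLam_eq (q a ρ : ℝ) :
    catLam q a ρ = ∫ v in (1 : ℝ)..(Real.sinh ρ / Real.sinh a), Fc q (Real.sinh a) v := rfl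

lemma one_lt_rpow_aux {q v : ℝ} (hq : 0 < q) (hv : 1 < v) : 1 < v ^ (2 * q) :=
  Real.one_lt_rpow_iff_of_pos (by linarith) |>.mpr (Or.inl ⟨hv, by linarith⟩)

lemma Fc_pos {q s : ℝ} (hq : 0 < q) (hs : 0 < s) {v : ℝ} (hv : 1 < v) : 0 < Fc q s v := by
  have h1 : (0:ℝ) < v ^ (2 * q) - 1 := sub_pos.mpr (one_lt_rpow_aux hq hv)
  have h2 : (0:ℝ) < 1 + v ^ 2 * s ^ 2 := by positivity
  exact mul_pos (mul_pos (Real.rpow_pos_of_pos h1 _) hs) (Real.rpow_pos_of_pos h2 _)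

lemma Fc_contOn {q s : ℝ} (hq : 0 < q) (hs : 0 < s) : ContinuousOn (Fc q s) (Set.Ioi 1) := by
  have h1 : ContinuousOn (fun v : ℝ => v ^ (2 * q) - 1) (Set.Ioi 1) :=
    (continuousOn_id.rpow_const fun x hx => Or.inl (by
      have : (1:ℝ) < x := hx
      positivity)).sub continuousOn_const
  have h2 : ContinuousOn (fun v : ℝ => (v ^ (2 * q) - 1) ^ (-(1:ℝ)/2)) (Set.Ioi 1) :=
    h1.rpow_const fun x hx => Or.inl (ne_of_gt (sub_pos.mpr (one_lt_rpow_aux hq hx)))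
  have h3 : ContinuousOn (fun v : ℝ => (1 + v ^ 2 * s ^ 2) ^ (-(1:ℝ)/2)) (Set.Ioi 1) := by
    refine ContinuousOn.rpow_const ?_ fun x _ => Or.inl (by positivity)
    fun_prop
  exact (h2.mul continuousOn_const).mul h3

lemma rpow_neg_half_eq {x : ℝ} (hx : 0 ≤ x) : x ^ (-(1:ℝ)/2) = (Real.sqrt x)⁻¹ := by
  rw [Real.sqrt_eq_rpow, ← Real.rpow_neg hx]
  norm_num

/-- Integrability of the profile integrand on `(1, ∞)`. -/
lemma Fc_integrableOn {q s : ℝ} (hq : 0 < q) (hs : 0 < s) :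
    IntegrableOn (Fc q s) (Set.Ioi 1) := by
  have hcont := Fc_contOn hq hs
  -- part 1 : on Ioc 1 2
  have h12 : IntegrableOn (Fc q s) (Set.Ioc 1 2) := by
    have hmeas : AEStronglyMeasurable (Fc q s) (volume.restrict (Set.Ioc 1 2)) :=
      (hcont.mono Set.Ioc_subset_Ioi_self).aestronglyMeasurable measurableSet_Ioc
    have hmaj : IntegrableOn (fun v : ℝ => s * q ^ (-(1:ℝ)/2) * (v - 1) ^ (-(1:ℝ)/2))
        (Set.Ioc 1 2) := by
      have h0 : IntervalIntegrable (fun x : ℝ => x ^ (-(1:ℝ)/2)) volume 0 1 :=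
        intervalIntegral.intervalIntegrable_rpow' (by norm_num)
      have h1 : IntervalIntegrable (fun x : ℝ => (x - 1) ^ (-(1:ℝ)/2)) volume 1 2 := by
        have := h0.comp_sub_right 1
        norm_num at this ⊢
        exact this
      have h2 : IntegrableOn (fun x : ℝ => (x - 1) ^ (-(1:ℝ)/2)) (Set.Ioc 1 2) :=
        (intervalIntegrable_iff_integrableOn_Ioc_of_le (by norm_num)).mp h1
      exact h2.const_mul _
    refine hmaj.integrable.mono' hmeas ?_
    rw [ae_restrict_iff' measurableSet_Ioc]
    filter_upwards with v hv
    obtain ⟨hv1, hv2⟩ := hv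
    have hv0 : (0:ℝ) < v := by linarith
    -- the key pointwise bound
    have hlog : (v - 1) / v ≤ Real.log v := by
      have h := Real.log_le_sub_one_of_pos (show (0:ℝ) < 1 / v by positivity)
      rw [Real.log_div one_ne_zero (ne_of_gt hv0), Real.log_one] at h
      have : -Real.log v ≤ 1 / v - 1 := by linarith
      have h2 : 1 - 1 / v ≤ Real.log v := by linarith
      calc (v - 1) / v = 1 - 1 / v := by field_simp
        _ ≤ Real.log v := h2
    have hexp : 1 + 2 * q * Real.log v ≤ v ^ (2 * q) := by
      rw [Real.rpow_def_of_pos hv0]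
      have := Real.add_one_le_exp (Real.log v * (2 * q))
      nlinarith [Real.log_nonneg hv1.le]
    have hkey : q * (v - 1) ≤ v ^ (2 * q) - 1 := by
      have hl0 : 0 ≤ Real.log v := Real.log_nonneg hv1.le
      have h3 : q * (v - 1) ≤ 2 * q * ((v - 1) / v) := by
        have hd : (v - 1) / 2 ≤ (v - 1) / v :=
          div_le_div_of_nonneg_left (by linarith) hv0 hv2
        calc q * (v - 1) = 2 * q * ((v - 1) / 2) := by ring
          _ ≤ 2 * q * ((v - 1) / v) := mul_le_mul_of_nonneg_left hd (by positivity)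
      have h4 : 2 * q * ((v - 1) / v) ≤ 2 * q * Real.log v :=
        mul_le_mul_of_nonneg_left hlog (by positivity)
      linarith
    have hqv : (0:ℝ) < q * (v - 1) := by nlinarith
    have hA : (v ^ (2 * q) - 1) ^ (-(1:ℝ)/2) ≤ (q * (v - 1)) ^ (-(1:ℝ)/2) :=
      Real.rpow_le_rpow_of_nonpos hqv hkey (by norm_num)
    have hB : (1 + v ^ 2 * s ^ 2) ^ (-(1:ℝ)/2) ≤ 1 :=
      Real.rpow_le_one_of_one_le_of_nonpos (by nlinarith) (by norm_num)
    have hApos : 0 < (v ^ (2 * q) - 1) ^ (-(1:ℝ)/2) :=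
      Real.rpow_pos_of_pos (sub_pos.mpr (one_lt_rpow_aux hq hv1)) _
    have hBpos : 0 < (1 + v ^ 2 * s ^ 2) ^ (-(1:ℝ)/2) :=
      Real.rpow_pos_of_pos (by positivity) _
    have hnorm : ‖Fc q s v‖ = Fc q s v := by
      rw [Real.norm_eq_abs, abs_of_pos (Fc_pos hq hs hv1)]
    rw [hnorm]
    have hmul : (q * (v - 1)) ^ (-(1:ℝ)/2) = q ^ (-(1:ℝ)/2) * (v - 1) ^ (-(1:ℝ)/2) :=
      Real.mul_rpow hq.le (by linarith)
    calc Fc q s v = (v ^ (2 * q) - 1) ^ (-(1:ℝ)/2) * s * (1 + v ^ 2 * s ^ 2) ^ (-(1:ℝ)/2) := rfl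
      _ ≤ (v ^ (2 * q) - 1) ^ (-(1:ℝ)/2) * s * 1 :=
          mul_le_mul_of_nonneg_left hB (by positivity)
      _ = (v ^ (2 * q) - 1) ^ (-(1:ℝ)/2) * s := by ring
      _ ≤ (q * (v - 1)) ^ (-(1:ℝ)/2) * s := mul_le_mul_of_nonneg_right hA hs.le
      _ = s * q ^ (-(1:ℝ)/2) * (v - 1) ^ (-(1:ℝ)/2) := by rw [hmul]; ring
  -- part 2 : on Ioi 2
  have h2i : IntegrableOn (Fc q s) (Set.Ioi 2) := by
    have hmeas : AEStronglyMeasurable (Fc q s) (volume.restrict (Set.Ioi 2)) :=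
      (hcont.mono fun x hx => lt_trans (one_lt_two : (1:ℝ) < 2) hx).aestronglyMeasurable measurableSet_Ioi
    obtain ⟨k, hk⟩ : ∃ k : ℝ, k = 1 - (2:ℝ) ^ (-(2 * q)) := ⟨_, rfl⟩
    have hk0 : 0 < k := by
      have : (2:ℝ) ^ (-(2 * q)) < 1 :=
        Real.rpow_lt_one_of_one_lt_of_neg one_lt_two (by linarith)
      rw [hk]; linarith
    have hmaj : IntegrableOn (fun v : ℝ => k ^ (-(1:ℝ)/2) * v ^ (-(q + 1))) (Set.Ioi 2) :=
      (integrableOn_Ioi_rpow_of_lt (by linarith) two_pos).const_mul _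
    refine hmaj.integrable.mono' hmeas ?_
    rw [ae_restrict_iff' measurableSet_Ioi]
    filter_upwards with v hv
    have hv2 : (2:ℝ) < v := hv
    have hv1 : (1:ℝ) < v := by linarith
    have hv0 : (0:ℝ) < v := by linarith
    have h2le : (2:ℝ) ^ (2 * q) ≤ v ^ (2 * q) :=
      Real.rpow_le_rpow (by norm_num) hv2.le (by positivity)
    have h2pos : (0:ℝ) < (2:ℝ) ^ (2 * q) := Real.rpow_pos_of_pos two_pos _
    have hkv : k * v ^ (2 * q) ≤ v ^ (2 * q) - 1 := by
      have hinv : (2:ℝ) ^ (-(2 * q)) = ((2:ℝ) ^ (2 * q))⁻¹ := by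
        rw [Real.rpow_neg (by norm_num)]
      have h1le : (1:ℝ) ≤ ((2:ℝ) ^ (2 * q))⁻¹ * v ^ (2 * q) := by
        rw [inv_mul_eq_div, le_div_iff₀ h2pos, one_mul]
        exact h2le
      have : k * v ^ (2 * q) = v ^ (2 * q) - ((2:ℝ) ^ (2 * q))⁻¹ * v ^ (2 * q) := by
        rw [hk, hinv]; ring
      linarith
    have hkvpos : 0 < k * v ^ (2 * q) := by positivity
    have hA : (v ^ (2 * q) - 1) ^ (-(1:ℝ)/2) ≤ (k * v ^ (2 * q)) ^ (-(1:ℝ)/2) :=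
      Real.rpow_le_rpow_of_nonpos hkvpos hkv (by norm_num)
    have hAeq : (k * v ^ (2 * q)) ^ (-(1:ℝ)/2) = k ^ (-(1:ℝ)/2) * v ^ (-q) := by
      have hexp2 : 2 * q * (-(1:ℝ)/2) = -q := by ring
      rw [Real.mul_rpow hk0.le (by positivity), ← Real.rpow_mul hv0.le, hexp2]
    have hBle : s * (1 + v ^ 2 * s ^ 2) ^ (-(1:ℝ)/2) ≤ v⁻¹ := by
      have hvs : (0:ℝ) < v * s := by positivity
      have h1 : (v * s) ^ (2:ℕ) ≤ 1 + v ^ 2 * s ^ 2 := by nlinarith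
      have h2 : (1 + v ^ 2 * s ^ 2) ^ (-(1:ℝ)/2) ≤ ((v * s) ^ (2:ℕ)) ^ (-(1:ℝ)/2) :=
        Real.rpow_le_rpow_of_nonpos (by positivity) h1 (by norm_num)
      have h3 : ((v * s) ^ (2:ℕ)) ^ (-(1:ℝ)/2) = (v * s)⁻¹ := by
        rw [← Real.rpow_natCast (v * s), ← Real.rpow_mul hvs.le]
        norm_num [Real.rpow_neg_one]
      calc s * (1 + v ^ 2 * s ^ 2) ^ (-(1:ℝ)/2) ≤ s * ((v * s) ^ (2:ℕ)) ^ (-(1:ℝ)/2) :=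
            mul_le_mul_of_nonneg_left h2 hs.le
        _ = s * (v * s)⁻¹ := by rw [h3]
        _ = v⁻¹ := by field_simp [mul_comm]
    have hnorm : ‖Fc q s v‖ = Fc q s v := by
      rw [Real.norm_eq_abs, abs_of_pos (Fc_pos hq hs hv1)]
    rw [hnorm]
    have hApos : 0 ≤ (v ^ (2 * q) - 1) ^ (-(1:ℝ)/2) :=
      (Real.rpow_pos_of_pos (sub_pos.mpr (one_lt_rpow_aux hq hv1)) _).le
    have hfin : v ^ (-q) * v⁻¹ = v ^ (-(q + 1)) := by
      rw [← Real.rpow_neg_one v, ← Real.rpow_add hv0]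
      congr 1; ring
    calc Fc q s v = (v ^ (2 * q) - 1) ^ (-(1:ℝ)/2) * (s * (1 + v ^ 2 * s ^ 2) ^ (-(1:ℝ)/2)) := by
          rw [Fc]; ring
      _ ≤ (k * v ^ (2 * q)) ^ (-(1:ℝ)/2) * (s * (1 + v ^ 2 * s ^ 2) ^ (-(1:ℝ)/2)) := by
          refine mul_le_mul_of_nonneg_right hA ?_
          positivity
      _ ≤ (k * v ^ (2 * q)) ^ (-(1:ℝ)/2) * v⁻¹ := by
          refine mul_le_mul_of_nonneg_left hBle ?_
          positivity
      _ = k ^ (-(1:ℝ)/2) * v ^ (-(q + 1)) := by rw [hAeq, mul_assoc, hfin]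
  have : IntegrableOn (Fc q s) (Set.Ioc 1 2 ∪ Set.Ioi 2) := h12.union h2i
  rwa [Set.Ioc_union_Ioi_eq_Ioi (by norm_num : (1:ℝ) ≤ 2)] at this

lemma Fc_intervalIntegrable {q s : ℝ} (hq : 0 < q) (hs : 0 < s) {x y : ℝ}
    (hx : 1 ≤ x) (hy : 1 ≤ y) : IntervalIntegrable (Fc q s) volume x y := by
  rw [intervalIntegrable_iff]
  exact (Fc_integrableOn hq hs).mono_set fun t ht =>
    lt_of_lt_of_le (lt_of_le_of_lt (le_min hx hy) ht.1) le_rfl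

/-- Pointwise strict monotonicity of the integrand in the neck parameter `s`. -/
lemma Fc_lt_Fc {q s S : ℝ} (hq : 0 < q) (hs : 0 < s) (hsS : s < S) {v : ℝ} (hv : 1 < v) :
    Fc q s v < Fc q S v := by
  have hA : 0 < (v ^ (2 * q) - 1) ^ (-(1:ℝ)/2) :=
    Real.rpow_pos_of_pos (sub_pos.mpr (one_lt_rpow_aux hq hv)) _
  have hS : 0 < S := hs.trans hsS
  have hx : (0:ℝ) ≤ 1 + v ^ 2 * s ^ 2 := by positivity
  have hy : (0:ℝ) ≤ 1 + v ^ 2 * S ^ 2 := by positivity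
  have key : s * (1 + v ^ 2 * s ^ 2) ^ (-(1:ℝ)/2) < S * (1 + v ^ 2 * S ^ 2) ^ (-(1:ℝ)/2) := by
    rw [rpow_neg_half_eq hx, rpow_neg_half_eq hy]
    have hsx : 0 < Real.sqrt (1 + v ^ 2 * s ^ 2) := Real.sqrt_pos.mpr (by positivity)
    have hsy : 0 < Real.sqrt (1 + v ^ 2 * S ^ 2) := Real.sqrt_pos.mpr (by positivity)
    rw [← div_eq_mul_inv, ← div_eq_mul_inv, div_lt_div_iff₀ hsx hsy]
    have e1 : s * Real.sqrt (1 + v ^ 2 * S ^ 2) = Real.sqrt (s ^ 2 * (1 + v ^ 2 * S ^ 2)) := by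
      rw [Real.sqrt_mul (sq_nonneg s), Real.sqrt_sq hs.le]
    have e2 : S * Real.sqrt (1 + v ^ 2 * s ^ 2) = Real.sqrt (S ^ 2 * (1 + v ^ 2 * s ^ 2)) := by
      rw [Real.sqrt_mul (sq_nonneg S), Real.sqrt_sq hS.le]
    rw [e1, e2]
    refine Real.sqrt_lt_sqrt (by positivity) ?_
    nlinarith
  calc Fc q s v = (v ^ (2 * q) - 1) ^ (-(1:ℝ)/2) * (s * (1 + v ^ 2 * s ^ 2) ^ (-(1:ℝ)/2)) := by
        rw [Fc]; ring
    _ < (v ^ (2 * q) - 1) ^ (-(1:ℝ)/2) * (S * (1 + v ^ 2 * S ^ 2) ^ (-(1:ℝ)/2)) :=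
        mul_lt_mul_of_pos_left key hA
    _ = Fc q S v := by rw [Fc]; ring

/-- Strict comparison of the total heights (monotonicity of `L`). -/
lemma L_lt {q s S : ℝ} (hq : 0 < q) (hs : 0 < s) (hsS : s < S) :
    (∫ v in Set.Ioi (1:ℝ), Fc q s v) < ∫ v in Set.Ioi (1:ℝ), Fc q S v := by
  have hS : 0 < S := hs.trans hsS
  have hia := Fc_integrableOn hq hs
  have hib := Fc_integrableOn hq hS
  have hnn : 0 ≤ᵐ[volume.restrict (Set.Ioi (1:ℝ))] fun v => Fc q S v - Fc q s v := by
    rw [EventuallyLE, ae_restrict_iff' measurableSet_Ioi]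
    filter_upwards with v hv
    exact le_of_lt (sub_pos.mpr (Fc_lt_Fc hq hs hsS hv))
  have hint : IntegrableOn (fun v => Fc q S v - Fc q s v) (Set.Ioi (1:ℝ)) := hib.sub hia
  have hpos : 0 < ∫ v in Set.Ioi (1:ℝ), (Fc q S v - Fc q s v) := by
    rw [MeasureTheory.setIntegral_pos_iff_support_of_nonneg_ae hnn hint]
    refine lt_of_lt_of_le ?_ (measure_mono (?_ :
      Set.Ioo (1:ℝ) 2 ⊆ Function.support (fun v => Fc q S v - Fc q s v) ∩ Set.Ioi 1))
    · rw [Real.volume_Ioo]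
      norm_num
    · intro v hv
      exact ⟨ne_of_gt (sub_pos.mpr (Fc_lt_Fc hq hs hsS hv.1)), hv.1⟩
  rw [MeasureTheory.integral_sub hib hia] at hpos
  linarith

lemma sinh_tendsto_atTop : Tendsto Real.sinh atTop atTop := by
  have hf : Tendsto (fun x : ℝ => (Real.exp x - 1) / 2) atTop atTop :=
    ((tendsto_atTop_add_const_right atTop (-1) Real.tendsto_exp_atTop).atTop_div_const
      two_pos).congr (fun x => by ring_nf)
  refine tendsto_atTop_mono' atTop ?_ hf
  filter_upwards [eventually_ge_atTop (0:ℝ)] with x hx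
  have h1 : Real.exp (-x) ≤ 1 := by
    rw [Real.exp_le_one_iff]; linarith
  rw [Real.sinh_eq]
  linarith

lemma tendsto_catLam {q a : ℝ} (hq : 0 < q) (ha : 0 < a) :
    Tendsto (catLam q a) atTop (𝓝 (∫ v in Set.Ioi (1:ℝ), Fc q (Real.sinh a) v)) := by
  have hs : 0 < Real.sinh a := Real.sinh_pos_iff.mpr ha
  have h1 : Tendsto (fun ρ => Real.sinh ρ / Real.sinh a) atTop atTop :=
    sinh_tendsto_atTop.atTop_div_const hs
  have := MeasureTheory.intervalIntegral_tendsto_integral_Ioi 1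
    (Fc_integrableOn hq hs) h1
  exact this.congr fun ρ => (catLam_eq q a ρ).symm

lemma catLam_continuousOn {q a : ℝ} (hq : 0 < q) (ha : 0 < a) :
    ContinuousOn (catLam q a) (Set.Ici a) := by
  have hs : 0 < Real.sinh a := Real.sinh_pos_iff.mpr ha
  set H : ℝ → ℝ := fun x => ∫ v in Set.Ioc 1 x, Fc q (Real.sinh a) v with hH
  have hHicc : ∀ M : ℝ, ContinuousOn H (Set.Icc 1 M) := by
    intro M
    refine intervalIntegral.continuousOn_primitive ?_
    have h1 : IntegrableOn (Fc q (Real.sinh a)) (Set.Ioc 1 M) :=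
      (Fc_integrableOn hq hs).mono_set Set.Ioc_subset_Ioi_self
    exact h1.congr_set_ae Ioc_ae_eq_Icc.symm
  have hHcont : ContinuousOn H (Set.Ici 1) := by
    intro x hx
    have h1 : ContinuousWithinAt H (Set.Icc 1 (x + 1)) x :=
      hHicc (x + 1) x ⟨hx, by linarith [hx.out]⟩
    have h2 : Set.Iic (x + 1) ∈ 𝓝 x := Iic_mem_nhds (by linarith)
    have h3 : Set.Ici (1:ℝ) ∩ Set.Iic (x + 1) = Set.Icc 1 (x + 1) := Set.Ici_inter_Iic
    exact (continuousWithinAt_inter h2).mp (h3 ▸ h1)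
  have hmap : Set.MapsTo (fun ρ => Real.sinh ρ / Real.sinh a) (Set.Ici a) (Set.Ici 1) := by
    intro ρ hρ
    have : Real.sinh a ≤ Real.sinh ρ := Real.sinh_le_sinh.mpr hρ
    exact (one_le_div hs).mpr this
  have hcomp : ContinuousOn (fun ρ => H (Real.sinh ρ / Real.sinh a)) (Set.Ici a) :=
    hHcont.comp ((Real.continuous_sinh.continuousOn).div_const _) hmap
  refine hcomp.congr fun ρ hρ => ?_
  rw [catLam_eq]
  have h1 : (1:ℝ) ≤ Real.sinh ρ / Real.sinh a := hmap hρ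
  rw [intervalIntegral.integral_of_le h1]

lemma catLam_pos {q a : ℝ} (hq : 0 < q) (ha : 0 < a) {ρ : ℝ} (hρ : a < ρ) :
    0 < catLam q a ρ := by
  have hs : 0 < Real.sinh a := Real.sinh_pos_iff.mpr ha
  have hX : 1 < Real.sinh ρ / Real.sinh a :=
    (one_lt_div hs).mpr (Real.sinh_lt_sinh.mpr hρ)
  rw [catLam_eq]
  exact intervalIntegral_pos_of_pos_on
    (Fc_intervalIntegrable hq hs le_rfl hX.le)
    (fun v hv => Fc_pos hq hs hv.1) hX

lemma catLam_self {q a : ℝ} (ha : 0 < a) : catLam q a a = 0 := by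
  have hs : 0 < Real.sinh a := Real.sinh_pos_iff.mpr ha
  rw [catLam_eq, div_self (ne_of_gt hs), intervalIntegral.integral_same]

/-- The gap between the two profile curves strictly decreases past `b`. -/
lemma slope_lt {q a b ρ₁ ρ₂ : ℝ} (hq : 0 < q) (ha : 0 < a) (hab : a < b)
    (h1 : b < ρ₁) (h12 : ρ₁ < ρ₂) :
    catLam q a ρ₂ - catLam q a ρ₁ < catLam q b ρ₂ - catLam q b ρ₁ := by
  have hb : 0 < b := ha.trans hab
  have hs : 0 < Real.sinh a := Real.sinh_pos_iff.mpr ha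
  have hS : 0 < Real.sinh b := Real.sinh_pos_iff.mpr hb
  have hsS : Real.sinh a < Real.sinh b := Real.sinh_lt_sinh.mpr hab
  set s := Real.sinh a
  set S := Real.sinh b
  set c := S / s with hc
  have hc1 : 1 < c := (one_lt_div hs).mpr hsS
  have hc0 : 0 < c := by linarith
  have hcs : c * s = S := div_mul_cancel₀ _ (ne_of_gt hs)
  set X₁ := Real.sinh ρ₁ / S with hX1def
  set X₂ := Real.sinh ρ₂ / S with hX2def
  have hX1 : 1 < X₁ := (one_lt_div hS).mpr (Real.sinh_lt_sinh.mpr h1)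
  have hX12 : X₁ < X₂ :=
    (div_lt_div_iff_of_pos_right hS).mpr (Real.sinh_lt_sinh.mpr h12)
  have hX2 : 1 < X₂ := hX1.trans hX12
  have he : ∀ ρ : ℝ, Real.sinh ρ / s = c * (Real.sinh ρ / S) := by
    intro ρ
    rw [hc]
    field_simp
  -- difference of the `a`-curve
  have hInt1a : IntervalIntegrable (Fc q s) volume 1 (c * X₁) :=
    Fc_intervalIntegrable hq hs le_rfl (by nlinarith)
  have hInt2a : IntervalIntegrable (Fc q s) volume 1 (c * X₂) :=
    Fc_intervalIntegrable hq hs le_rfl (by nlinarith)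
  have hdiffa : catLam q a ρ₂ - catLam q a ρ₁ = ∫ v in (c * X₁)..(c * X₂), Fc q s v := by
    rw [catLam_eq, catLam_eq, he ρ₁, he ρ₂, ← hX1def, ← hX2def]
    exact intervalIntegral.integral_interval_sub_left hInt2a hInt1a
  have hInt1b : IntervalIntegrable (Fc q S) volume 1 X₁ :=
    Fc_intervalIntegrable hq hS le_rfl hX1.le
  have hInt2b : IntervalIntegrable (Fc q S) volume 1 X₂ :=
    Fc_intervalIntegrable hq hS le_rfl hX2.le
  have hdiffb : catLam q b ρ₂ - catLam q b ρ₁ = ∫ v in X₁..X₂, Fc q S v := by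
    rw [catLam_eq, catLam_eq, ← hX1def, ← hX2def]
    exact intervalIntegral.integral_interval_sub_left hInt2b hInt1b
  -- substitution v = c * w
  have hsub : (∫ v in (c * X₁)..(c * X₂), Fc q s v) = ∫ w in X₁..X₂, c * Fc q s (c * w) := by
    rw [intervalIntegral.integral_const_mul]
    rw [intervalIntegral.integral_comp_mul_left (fun v => Fc q s v) (ne_of_gt hc0)]
    rw [smul_eq_mul, ← mul_assoc, mul_inv_cancel₀ (ne_of_gt hc0), one_mul]
  -- pointwise strict comparison on (X₁, X₂)
  have hkey : ∀ w ∈ Set.Ioo X₁ X₂, 0 < Fc q S w - c * Fc q s (c * w) := by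
    intro w hw
    have hw1 : 1 < w := hX1.trans hw.1
    have hw0 : 0 < w := by linarith
    have hcw : w < c * w := by nlinarith
    have hcw1 : 1 < c * w := by linarith
    have hBpos : 0 < (1 + w ^ 2 * S ^ 2) ^ (-(1:ℝ)/2) :=
      Real.rpow_pos_of_pos (by positivity) _
    have hrw : (c * w) ^ 2 * s ^ 2 = w ^ 2 * S ^ 2 := by
      rw [← hcs]; ring
    have hcf : c * Fc q s (c * w)
        = ((c * w) ^ (2 * q) - 1) ^ (-(1:ℝ)/2) * S * (1 + w ^ 2 * S ^ 2) ^ (-(1:ℝ)/2) := by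
      rw [Fc, hrw, ← hcs]; ring
    have hlt : ((c * w) ^ (2 * q) - 1) ^ (-(1:ℝ)/2) < (w ^ (2 * q) - 1) ^ (-(1:ℝ)/2) := by
      have h1' : 0 < w ^ (2 * q) - 1 := sub_pos.mpr (one_lt_rpow_aux hq hw1)
      have h2' : w ^ (2 * q) < (c * w) ^ (2 * q) :=
        Real.rpow_lt_rpow hw0.le hcw (by linarith)
      exact Real.rpow_lt_rpow_of_neg h1' (by linarith) (by norm_num)
    have : c * Fc q s (c * w) < Fc q S w := by
      rw [hcf, Fc]
      have hSB : 0 < S * (1 + w ^ 2 * S ^ 2) ^ (-(1:ℝ)/2) := mul_pos hS hBpos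
      calc ((c * w) ^ (2 * q) - 1) ^ (-(1:ℝ)/2) * S * (1 + w ^ 2 * S ^ 2) ^ (-(1:ℝ)/2)
          = ((c * w) ^ (2 * q) - 1) ^ (-(1:ℝ)/2) * (S * (1 + w ^ 2 * S ^ 2) ^ (-(1:ℝ)/2)) := by
            ring
        _ < (w ^ (2 * q) - 1) ^ (-(1:ℝ)/2) * (S * (1 + w ^ 2 * S ^ 2) ^ (-(1:ℝ)/2)) :=
            mul_lt_mul_of_pos_right hlt hSB
        _ = (w ^ (2 * q) - 1) ^ (-(1:ℝ)/2) * S * (1 + w ^ 2 * S ^ 2) ^ (-(1:ℝ)/2) := by ring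
    linarith
  -- integrate the strict inequality
  have hsub1 : Set.uIcc X₁ X₂ ⊆ Set.Ioi (1:ℝ) := by
    rw [Set.uIcc_of_le hX12.le]
    intro t ht
    exact lt_of_lt_of_le hX1 ht.1
  have hcontb : ContinuousOn (fun w => Fc q S w) (Set.uIcc X₁ X₂) :=
    (Fc_contOn hq hS).mono hsub1
  have hconta : ContinuousOn (fun w => c * Fc q s (c * w)) (Set.uIcc X₁ X₂) := by
    refine ContinuousOn.const_smul ?_ c |>.congr fun x _ => rfl
    refine (Fc_contOn hq hs).comp (continuous_const.mul continuous_id).continuousOn ?_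
    intro t ht
    have h1t : 1 < t := hsub1 ht
    have : t < c * t := by nlinarith
    exact lt_trans h1t this
  have hpos : 0 < ∫ w in X₁..X₂, (Fc q S w - c * Fc q s (c * w)) :=
    intervalIntegral_pos_of_pos_on
      ((hcontb.sub hconta).intervalIntegrable) hkey hX12
  rw [intervalIntegral.integral_sub hcontb.intervalIntegrable hconta.intervalIntegrable] at hpos
  rw [hdiffa, hdiffb, hsub]
  linarith

/-- For `0 < a < b`, the profile curves of the r-catenoids with neck radii
`a` and `b` intersect at exactly one radius `ρ* > b`: there is exactly one `ρ* ∈ (b, ∞)`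
with `λ(a, ρ*) = λ(b, ρ*)`. -/
theorem stmt_17 (q a b : ℝ) (hq : 0 < q) (ha : 0 < a) (hab : a < b) :
    ∃! ρ : ℝ, ρ ∈ Set.Ioi b ∧ catLam q a ρ = catLam q b ρ := by
  have hb : 0 < b := ha.trans hab
  have hsa : 0 < Real.sinh a := Real.sinh_pos_iff.mpr ha
  have hsb : 0 < Real.sinh b := Real.sinh_pos_iff.mpr hb
  have hsab : Real.sinh a < Real.sinh b := Real.sinh_lt_sinh.mpr hab
  set g : ℝ → ℝ := fun ρ => catLam q a ρ - catLam q b ρ with hg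
  have hgb : 0 < g b := by
    have h0 : catLam q b b = 0 := catLam_self hb
    have h1 : 0 < catLam q a b := catLam_pos hq ha hab
    simp only [hg, h0, sub_zero]
    exact h1
  -- the limit at infinity is negative
  have hL : (∫ v in Set.Ioi (1:ℝ), Fc q (Real.sinh a) v)
      < ∫ v in Set.Ioi (1:ℝ), Fc q (Real.sinh b) v := L_lt hq hsa hsab
  have htend : Tendsto g atTop (𝓝 ((∫ v in Set.Ioi (1:ℝ), Fc q (Real.sinh a) v)
      - ∫ v in Set.Ioi (1:ℝ), Fc q (Real.sinh b) v)) :=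
    (tendsto_catLam hq ha).sub (tendsto_catLam hq hb)
  have hev : ∀ᶠ ρ in atTop, g ρ < 0 := htend.eventually_lt_const (by linarith)
  obtain ⟨T₀, hT₀⟩ := eventually_atTop.mp hev
  set T := max T₀ (b + 1) with hT
  have hbT : b < T := lt_of_lt_of_le (by linarith) (le_max_right _ _)
  have hgT : g T < 0 := hT₀ T (le_max_left _ _)
  -- continuity of g on [b, T]
  have hconta : ContinuousOn (catLam q a) (Set.Icc b T) :=
    (catLam_continuousOn hq ha).mono fun x hx => le_trans hab.le hx.1
  have hcontb : ContinuousOn (catLam q b) (Set.Icc b T) :=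
    (catLam_continuousOn hq hb).mono fun x hx => hx.1
  have hcont : ContinuousOn g (Set.Icc b T) := hconta.sub hcontb
  -- intermediate value theorem
  have hivt := intermediate_value_Ioo' hbT.le hcont
  obtain ⟨ρ₀, hρ₀mem, hρ₀⟩ := hivt ⟨hgT, hgb⟩
  have hρ₀b : b < ρ₀ := hρ₀mem.1
  have hρ₀eq : catLam q a ρ₀ = catLam q b ρ₀ := by
    have : catLam q a ρ₀ - catLam q b ρ₀ = 0 := hρ₀
    linarith
  refine ⟨ρ₀, ⟨hρ₀b, hρ₀eq⟩, ?_⟩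
  -- uniqueness
  rintro ρ' ⟨hρ'b, hρ'eq⟩
  have hsl : ∀ x y : ℝ, b < x → x < y →
      catLam q a x = catLam q b x → catLam q a y = catLam q b y → False := by
    intro x y hx hxy hex hey
    have := slope_lt hq ha hab hx hxy
    rw [hex, hey] at this
    exact lt_irrefl _ this
  rcases lt_trichotomy ρ' ρ₀ with h | h | h
  · exact absurd (hsl ρ' ρ₀ hρ'b h hρ'eq hρ₀eq) not_false
  · exact h
  · exact absurd (hsl ρ₀ ρ' hρ₀b h hρ₀eq hρ'eq) not_false
end

section
/- Let n ≥ 3 and 1 ≤ r < n − 1 be integers, and let k > 0 be a real number. Consider the vector κ = (k, k, …, k, −((n−r−1)/(r+1))·k) ∈ ℝⁿ consisting of n − 1 copies of k followed by −((n−r−1)/(r+1))·k. Let e_j denote the j-th elementary symmetric polynomial in n variables. Then: (1) e_j(κ) > 0 for all 1 ≤ j ≤ r; (2) e_{r+1}(κ) = 0; (3) e_j(κ) < 0 for all r + 1 < j ≤ n. -/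
/-- The `j`-th elementary symmetric polynomial of `x₁, …, xₙ`. -/
noncomputable def esymmVal (n j : ℕ) (x : Fin n → ℝ) : ℝ :=
  ∑ s ∈ Finset.univ.powersetCard j, ∏ i ∈ s, x i

open Finset in
lemma esymm_eq (n j : ℕ) (hj : 1 ≤ j) (i₀ : Fin n) (a b : ℝ) (x : Fin n → ℝ)
    (hx : ∀ i, i ≠ i₀ → x i = a) (hb : x i₀ = b) :
    esymmVal n j x = ((n-1).choose j : ℝ) * a^j + ((n-1).choose (j-1) : ℝ) * (a^(j-1) * b) := by
  classical
  have hcard : (univ.erase i₀).card = n - 1 := by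
    simp [Finset.card_erase_of_mem]
  unfold esymmVal
  rw [← Finset.sum_filter_add_sum_filter_not (univ.powersetCard j) (fun s => i₀ ∈ s)]
  have h1 : ∀ s ∈ (univ.powersetCard j).filter (fun s => i₀ ∈ s),
      ∏ i ∈ s, x i = a^(j-1) * b := by
    intro s hs
    simp only [mem_filter, mem_powersetCard] at hs
    obtain ⟨⟨_, hcardj⟩, hi⟩ := hs
    rw [← Finset.prod_erase_mul s x hi, hb]
    congr 1
    rw [Finset.prod_congr rfl (fun i hi' => hx i (Finset.ne_of_mem_erase hi')),
      Finset.prod_const, Finset.card_erase_of_mem hi, hcardj]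
  have h2 : ∀ s ∈ (univ.powersetCard j).filter (fun s => i₀ ∉ s),
      ∏ i ∈ s, x i = a^j := by
    intro s hs
    simp only [mem_filter, mem_powersetCard] at hs
    obtain ⟨⟨_, hcardj⟩, hi⟩ := hs
    rw [Finset.prod_congr rfl (fun i hi' => hx i (fun h => hi (h ▸ hi'))),
      Finset.prod_const, hcardj]
  rw [Finset.sum_congr rfl h1, Finset.sum_congr rfl h2, Finset.sum_const, Finset.sum_const]
  have hc1 : ((univ.powersetCard j).filter (fun s => i₀ ∈ s)).card = (n-1).choose (j-1) := by
    rw [← hcard, ← Finset.card_powersetCard]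
    apply Finset.card_nbij' (fun s => s.erase i₀) (fun s => insert i₀ s)
    · intro s hs
      simp only [Finset.mem_coe, mem_filter, mem_powersetCard] at hs
      simp only [Finset.mem_coe, mem_powersetCard]
      exact ⟨Finset.erase_subset_erase _ (Finset.subset_univ s |>.trans (le_refl _)),
        by rw [Finset.card_erase_of_mem hs.2, hs.1.2]⟩
    · intro s hs
      simp only [Finset.mem_coe, mem_powersetCard, Finset.subset_erase] at hs
      simp only [Finset.mem_coe, mem_filter, mem_powersetCard]
      refine ⟨⟨Finset.subset_univ _, ?_⟩, Finset.mem_insert_self _ _⟩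
      rw [Finset.card_insert_of_notMem hs.1.2, hs.2, Nat.sub_add_cancel hj]
    · intro s hs
      simp only [Finset.mem_coe, mem_filter] at hs
      exact Finset.insert_erase hs.2
    · intro s hs
      simp only [Finset.mem_coe, mem_powersetCard, Finset.subset_erase] at hs
      exact Finset.erase_insert hs.1.2
  have hc2 : ((univ.powersetCard j).filter (fun s => i₀ ∉ s)).card = (n-1).choose j := by
    rw [← hcard, ← Finset.card_powersetCard]
    congr 1
    ext s
    simp [Finset.mem_powersetCard, Finset.subset_erase, and_comm, and_assoc]
  rw [hc1, hc2]
  ring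

/-- Proposition 2.7 of the paper: for the principal curvature vector
`κ = (k, …, k, -((n-r-1)/(r+1)) k)` of the r-catenoid (with `k > 0`), the elementary
symmetric polynomials satisfy `e_j(κ) > 0` for `1 ≤ j ≤ r`, `e_{r+1}(κ) = 0`, and
`e_j(κ) < 0` for `r + 1 < j ≤ n`. -/
theorem stmt_19 (n r : ℕ) (hn : 3 ≤ n) (hr1 : 1 ≤ r) (hrn : r < n - 1)
    (k : ℝ) (hk : 0 < k)
    (κ : Fin n → ℝ)
    (hκ : ∀ i : Fin n,
      κ i = if (i : ℕ) < n - 1 then k else -(((n : ℝ) - r - 1) / ((r : ℝ) + 1)) * k) :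
    (∀ j : ℕ, 1 ≤ j → j ≤ r → 0 < esymmVal n j κ) ∧
    esymmVal n (r + 1) κ = 0 ∧
    (∀ j : ℕ, r + 1 < j → j ≤ n → esymmVal n j κ < 0) := by
  have hn0 : 0 < n := by omega
  have hrn' : r + 2 ≤ n := by omega
  set c : ℝ := ((n : ℝ) - r - 1) / ((r : ℝ) + 1) with hc
  have hrpos : (0:ℝ) < (r:ℝ) + 1 := by positivity
  have hcpos : 0 < c := by
    apply div_pos _ hrpos
    have : (r:ℝ) + 2 ≤ (n:ℝ) := by exact_mod_cast hrn'
    linarith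
  set i₀ : Fin n := ⟨n - 1, by omega⟩ with hi₀
  have hx : ∀ i, i ≠ i₀ → κ i = k := by
    intro i hi
    rw [hκ i, if_pos]
    have := i.isLt
    have : (i : ℕ) ≠ n - 1 := fun h => hi (Fin.ext h)
    omega
  have hb : κ i₀ = -c * k := by
    rw [hκ i₀, if_neg]; simp [hi₀]
  -- main formula for 1 ≤ j
  have key : ∀ j : ℕ, 1 ≤ j →
      esymmVal n j κ = k ^ j * (((n-1).choose j : ℝ) - c * ((n-1).choose (j-1) : ℝ)) := by
    intro j hj
    rw [esymm_eq n j hj i₀ k (-c*k) κ hx hb]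
    have : k ^ j = k ^ (j-1) * k := by
      rw [← pow_succ]; congr 1; omega
    rw [this]; ring
  -- combinatorial identity: j * C(n-1,j) = (n-j) * C(n-1,j-1) in ℝ, for 1 ≤ j ≤ n
  have iden : ∀ j : ℕ, 1 ≤ j → j ≤ n →
      ((n-1).choose j : ℝ) * j = ((n-1).choose (j-1) : ℝ) * ((n:ℝ) - j) := by
    intro j hj hjn
    have h := Nat.choose_succ_right_eq (n-1) (j-1)
    have hj' : j - 1 + 1 = j := by omega
    rw [hj'] at h
    have hsub : n - 1 - (j - 1) = n - j := by omega
    rw [hsub] at h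
    have h' : (((n-1).choose j * j : ℕ) : ℝ) = (((n-1).choose (j-1) * (n - j) : ℕ) : ℝ) := by
      rw [h]
    push_cast [Nat.cast_sub hjn] at h'
    linarith [h']
  -- sign of D(j) for 1 ≤ j ≤ n
  have hD : ∀ j : ℕ, 1 ≤ j → j ≤ n →
      ((r:ℝ)+1) * j * (((n-1).choose j : ℝ) - c * ((n-1).choose (j-1) : ℝ))
        = (n:ℝ) * ((r:ℝ) + 1 - j) * ((n-1).choose (j-1) : ℝ) := by
    intro j hj hjn
    have hi := iden j hj hjn
    have hcr : c * ((r:ℝ)+1) = (n:ℝ) - r - 1 := by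
      rw [hc]; field_simp
    linear_combination ((r:ℝ)+1) * hi - (j:ℝ) * (((n-1).choose (j-1) : ℝ)) * hcr
  have hCpos : ∀ j : ℕ, 1 ≤ j → j ≤ n → (0:ℝ) < ((n-1).choose (j-1) : ℝ) := by
    intro j hj hjn
    exact_mod_cast Nat.choose_pos (by omega : j - 1 ≤ n - 1)
  refine ⟨?_, ?_, ?_⟩
  · intro j hj hjr
    rw [key j hj]
    have hjn : j ≤ n := by omega
    have h1 := hD j hj hjn
    have h2 := hCpos j hj hjn
    have hjlt : (j:ℝ) < (r:ℝ) + 1 := by exact_mod_cast Nat.lt_succ_of_le hjr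
    have hjpos : (0:ℝ) < (j:ℝ) := by exact_mod_cast hj
    have hnpos : (0:ℝ) < (n:ℝ) := by exact_mod_cast hn0
    have : 0 < ((n-1).choose j : ℝ) - c * ((n-1).choose (j-1) : ℝ) := by
      nlinarith [h1, mul_pos (mul_pos hnpos (by linarith : (0:ℝ) < (r:ℝ)+1-(j:ℝ))) h2,
        mul_pos hrpos hjpos]
    positivity
  · have hj : 1 ≤ r + 1 := by omega
    rw [key (r+1) hj]
    have h1 := hD (r+1) hj (by omega)
    have h1' : (((r:ℝ)+1)*((r:ℝ)+1)) *
        (((n-1).choose (r+1) : ℝ) - c * ((n-1).choose (r+1-1) : ℝ)) = 0 := by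
      push_cast at h1 ⊢
      linear_combination h1
    have h0 := (mul_eq_zero.mp h1').resolve_left (by positivity)
    rw [h0, mul_zero]
  · intro j hjr hjn
    have hj : 1 ≤ j := by omega
    rw [key j hj]
    have h1 := hD j hj hjn
    have h2 := hCpos j hj hjn
    have hjgt : (r:ℝ) + 1 < (j:ℝ) := by exact_mod_cast hjr
    have hjpos : (0:ℝ) < (j:ℝ) := by exact_mod_cast hj
    have hnpos : (0:ℝ) < (n:ℝ) := by exact_mod_cast hn0
    have hDneg : ((n-1).choose j : ℝ) - c * ((n-1).choose (j-1) : ℝ) < 0 := by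
      nlinarith [h1, mul_pos (mul_pos hnpos (by linarith : (0:ℝ) < (j:ℝ)-((r:ℝ)+1))) h2,
        mul_pos hrpos hjpos]
    have hkpow : 0 < k ^ j := by positivity
    nlinarith
end
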